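/- Let H be a Hilbert space, U ⊆ ℂ a domain, and E the trivial holomorphic line bundle U × ℂ with frame 𝕀. Suppose for each t ∈ U a surjective bounded linear map π_t : H → ℂ is given such that ker(π_t) varies holomorphically (i.e., for each f ∈ H, t ↦ π_t(f) is holomorphic). Define a metric by e^{-ϕ(t)} := inf{ ‖f‖² : f ∈ H, π_t(f) = 1 }. Then ϕ is subharmonic on U. -/

import Mathlib

open Complex MeasureTheory Metric Set Filter

noncomputable section

/-- A function is subharmonic on `U ⊆ ℂ` if it is upper semicontinuous on `U` and satisfies
the sub-mean value inequality on every circle whose closed disc is contained in `U`. -/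
def SubharmonicOn (u : ℂ → ℝ) (U : Set ℂ) : Prop :=
  UpperSemicontinuousOn u U ∧
    ∀ c : ℂ, ∀ R : ℝ, 0 < R → closedBall c R ⊆ U →
      u c ≤ (2 * Real.pi)⁻¹ *
        ∫ θ in (0:ℝ)..(2 * Real.pi), u (c + R * Complex.exp (θ * Complex.I))

/-- A function is plurisubharmonic on `Ω` in a complex normed space if it is upper
semicontinuous on `Ω` and satisfies the sub-mean value inequality along every complex line. -/
def PlurisubharmonicOn {E : Type*} [NormedAddCommGroup E] [NormedSpace ℂ E]
    (φ : E → ℝ) (Ω : Set E) : Prop :=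
  UpperSemicontinuousOn φ Ω ∧
    ∀ a b : E, ∀ R : ℝ, 0 < R →
      (∀ w : ℂ, ‖w‖ ≤ R → a + w • b ∈ Ω) →
      φ a ≤ (2 * Real.pi)⁻¹ *
        ∫ θ in (0:ℝ)..(2 * Real.pi), φ (a + (R * Complex.exp (θ * Complex.I)) • b)

/-- A domain is pseudoconvex if it is open and admits a plurisubharmonic exhaustion function. -/
def Pseudoconvex {E : Type*} [NormedAddCommGroup E] [NormedSpace ℂ E]
    (Ω : Set E) : Prop :=
  IsOpen Ω ∧ ∃ ρ : E → ℝ, PlurisubharmonicOn ρ Ω ∧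
    ∀ c : ℝ, IsCompact {x ∈ Ω | ρ x ≤ c}

/-- The `n`-dimensional torus, viewed as the unimodular elements of `ℂⁿ`
(acting on `ℂⁿ` by coordinatewise multiplication, i.e. coordinatewise rotation). -/
def UnitTorus (n : ℕ) : Set (Fin n → ℂ) := {α | ∀ i, ‖α i‖ = 1}

namespace QMSub

lemma continuous_log_abs {g : ℝ → ℂ} (hg : Continuous g) (h0 : ∀ x, g x ≠ 0) :
    Continuous fun x => Real.log (‖g x‖) := by
  rw [continuous_iff_continuousAt]
  intro x
  exact (Real.continuousAt_log (by simpa using h0 x)).comp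
    (continuous_norm.continuousAt.comp hg.continuousAt)

lemma circle_integral_eq (F : ℂ → ℂ) (c : ℂ) (R : ℝ) (hR : 0 < R)
    (hF : DifferentiableOn ℂ F (closedBall c R)) :
    ∫ θ in (0:ℝ)..(2*Real.pi), F (circleMap c R θ) = (2*Real.pi : ℝ) * F c := by
  have hd : DiffContOnCl ℂ F (ball c R) :=
    DifferentiableOn.diffContOnCl (by rwa [closure_ball c hR.ne'])
  have key := hd.circleIntegral_sub_inv_smul (mem_ball_self hR)
  have h1 : (∮ z in C(c, R), (z - c)⁻¹ • F z)
      = I * ∫ θ in (0:ℝ)..(2*Real.pi), F (circleMap c R θ) := by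
    rw [circleIntegral, ← intervalIntegral.integral_const_mul]
    refine intervalIntegral.integral_congr fun θ _ => ?_
    have hne : circleMap 0 R θ ≠ 0 := circleMap_ne_center (c := (0:ℂ)) hR.ne'
    rw [deriv_circleMap, circleMap_sub_center, smul_eq_mul, smul_eq_mul]
    field_simp
  rw [h1] at key
  have h2 : (2 * (Real.pi:ℂ) * I) • F c = I * (((2*Real.pi : ℝ):ℂ) * F c) := by
    rw [smul_eq_mul]; push_cast; ring
  exact mul_left_cancel₀ I_ne_zero (key.trans h2)

lemma circle_re_eq (F : ℂ → ℂ) (c : ℂ) (R : ℝ) (hR : 0 < R)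
    (hF : DifferentiableOn ℂ F (closedBall c R)) :
    ∫ θ in (0:ℝ)..(2*Real.pi), (F (circleMap c R θ)).re = 2*Real.pi * (F c).re := by
  have hcont : Continuous fun θ => F (circleMap c R θ) := by
    have := hF.continuousOn.comp_continuous (continuous_circleMap c R)
      (fun θ => circleMap_mem_closedBall c hR.le θ)
    exact this
  have hint : IntervalIntegrable (fun θ => F (circleMap c R θ)) volume 0 (2*Real.pi) :=
    hcont.intervalIntegrable _ _
  have hcc := Complex.reCLM.intervalIntegral_comp_comm hint
  rw [circle_integral_eq F c R hR hF] at hcc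
  simpa [Complex.re_ofReal_mul] using hcc

lemma integral_log_abs_sub (c a : ℂ) (R : ℝ) (hR : 0 < R) (ha : ‖a - c‖ < R) :
    ∫ θ in (0:ℝ)..(2*Real.pi), Real.log (‖circleMap c R θ - a‖)
      = 2*Real.pi * Real.log R := by
  have hRC : ((R:ℝ):ℂ) ≠ 0 := Complex.ofReal_ne_zero.mpr hR.ne'
  set b : ℂ := (a - c) / (R:ℂ) with hb_def
  have hb : ‖b‖ < 1 := by
    rw [hb_def, norm_div, Complex.norm_real, Real.norm_eq_abs, abs_of_pos hR, div_lt_one hR]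
    exact ha
  set w : ℂ := starRingEnd ℂ b with hw_def
  have hw : ‖w‖ < 1 := by rwa [hw_def, Complex.norm_conj]
  set G : ℂ → ℂ := fun z => Complex.log (1 - w * z) with hG_def
  have hsub : ∀ z : ℂ, ‖z‖ ≤ 1 → 1 - w * z ≠ 0 := by
    intro z hz h0
    have : ‖w * z‖ = 1 := by
      have : w * z = 1 := by linear_combination -h0
      rw [this, norm_one]
    rw [norm_mul] at this
    nlinarith [norm_nonneg z, norm_nonneg w]
  have hGd : DifferentiableOn ℂ G (closedBall 0 1) := by
    intro z hz
    have hz1 : ‖z‖ ≤ 1 := by simpa [Complex.dist_eq] using mem_closedBall.mp hz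
    have habs : ‖w * z‖ < 1 := by
      rw [norm_mul]
      calc ‖w‖ * ‖z‖ ≤ ‖w‖ * 1 := by
            exact mul_le_mul_of_nonneg_left hz1 (norm_nonneg w)
        _ < 1 := by simpa using hw
    have hslit : 1 - w * z ∈ Complex.slitPlane := by
      rw [Complex.mem_slitPlane_iff]
      left
      have h1 : (w*z).re ≤ ‖w*z‖ := Complex.re_le_norm _
      simp only [Complex.sub_re, Complex.one_re]
      linarith
    exact (((differentiableAt_const (1:ℂ)).sub
      (differentiableAt_id.const_mul w)).clog hslit).differentiableWithinAt
  have hmv := circle_re_eq G 0 1 one_pos hGd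
  have hG0 : G 0 = 0 := by simp [hG_def]
  rw [hG0] at hmv
  simp only [Complex.zero_re, mul_zero] at hmv
  have hpt : ∀ θ : ℝ, Real.log (‖circleMap c R θ - a‖)
      = Real.log R + (G (circleMap 0 1 θ)).re := by
    intro θ
    set e : ℂ := Complex.exp (θ * I) with he_def
    have habse : ‖e‖ = 1 := Complex.norm_exp_ofReal_mul_I θ
    have he : e * starRingEnd ℂ e = 1 := by
      rw [Complex.mul_conj]
      rw [Complex.normSq_eq_norm_sq, habse]
      norm_num
    have hae : a - c = (R:ℂ) * b := by rw [hb_def]; field_simp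
    have hfac : circleMap c R θ - a = (R:ℂ) * e * (starRingEnd ℂ) (1 - w * e) := by
      simp only [hw_def, map_sub, map_one, map_mul, Complex.conj_conj]
      have hcm : circleMap c R θ = c + (R:ℂ) * e := rfl
      rw [hcm]
      linear_combination ((R:ℂ) * b) * he - hae
    have h1 : ‖circleMap c R θ - a‖ = R * ‖1 - w * e‖ := by
      rw [hfac, norm_mul, norm_mul, Complex.norm_conj, Complex.norm_real, Real.norm_eq_abs, abs_of_pos hR,
        habse, mul_one]
    have hne : (1:ℂ) - w * e ≠ 0 := hsub e habse.le
    have hcm1 : circleMap 0 1 θ = e := by simp [circleMap, he_def]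
    rw [h1, Real.log_mul hR.ne' (norm_ne_zero_iff.mpr hne), hcm1, hG_def]
    rw [Complex.log_re]
  rw [intervalIntegral.integral_congr (fun θ _ => hpt θ)]
  have hGcont : Continuous fun θ => (G (circleMap 0 1 θ)).re := by
    have hc1 : Continuous fun θ => G (circleMap 0 1 θ) := by
      have := hGd.continuousOn.comp_continuous (continuous_circleMap 0 1)
        (fun θ => circleMap_mem_closedBall 0 one_pos.le θ)
      exact this
    exact Complex.continuous_re.comp hc1
  rw [intervalIntegral.integral_add intervalIntegrable_const (hGcont.intervalIntegrable _ _)]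
  rw [hmv]
  simp [mul_comm]

lemma exists_log {u : ℂ → ℂ} {c : ℂ} {ρ τ : ℝ} (hτ0 : 0 < τ) (hτρ : τ < ρ)
    (hu : DifferentiableOn ℂ u (ball c ρ)) (hne : ∀ z ∈ ball c ρ, u z ≠ 0) :
    ∃ L : ℂ → ℂ, DifferentiableOn ℂ L (ball c τ) ∧ ∀ z ∈ ball c τ, Complex.exp (L z) = u z := by
  have hρ0 : 0 < ρ := hτ0.trans hτρ
  have hcball : c ∈ ball c ρ := mem_ball_self hρ0
  have hu_an : AnalyticOnNhd ℂ u (ball c ρ) := hu.analyticOnNhd isOpen_ball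
  have hdu : DifferentiableOn ℂ (deriv u) (ball c ρ) := hu_an.deriv.differentiableOn
  set v : ℂ → ℂ := fun z => deriv u z / u z with hv_def
  have hv : DifferentiableOn ℂ v (ball c ρ) := hdu.div hu hne
  set σ : ℝ := (τ + ρ)/2 with hσ_def
  have hτσ : τ < σ := by rw [hσ_def]; linarith
  have hσρ : σ < ρ := by rw [hσ_def]; linarith
  have hσ0 : 0 < σ := hτ0.trans hτσ
  set σ' : NNReal := ⟨σ, hσ0.le⟩ with hσ'_def
  have hvσ : DifferentiableOn ℂ v (closedBall c σ') :=
    hv.mono (closedBall_subset_ball (by exact_mod_cast hσρ))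
  have hp := hvσ.hasFPowerSeriesOnBall (by exact_mod_cast hσ0)
  set p := cauchyPowerSeries v c σ' with hp_def
  have hsum : ∀ z ∈ ball c σ, HasSum (fun n => (z - c)^n * p.coeff n) (v z) := by
    intro z hz
    have hz' : z - c ∈ Metric.eball (0:ℂ) σ' := by
      rw [Metric.eball_coe]
      rw [mem_ball_zero_iff]
      exact (by simpa [dist_eq_norm] using hz : ‖z - c‖ < σ)
    have hS := hp.hasSum hz'
    simp only [FormalMultilinearSeries.apply_eq_pow_smul_coeff, smul_eq_mul] at hS
    have hzc : c + (z - c) = z := by ring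
    rwa [hzc] at hS
  set μ : ℝ := (τ + σ)/2 with hμ_def
  have hτμ : τ < μ := by rw [hμ_def]; linarith
  have hμσ : μ < σ := by rw [hμ_def]; linarith
  have hμ0 : 0 < μ := hτ0.trans hτμ
  set μ' : NNReal := ⟨μ, hμ0.le⟩ with hμ'_def
  have hrad : (μ' : ENNReal) < p.radius := by
    refine lt_of_lt_of_le ?_ hp.r_le
    exact_mod_cast (by exact_mod_cast hμσ : μ' < σ')
  obtain ⟨C, hC0, hC⟩ := p.norm_mul_pow_le_of_lt_radius hrad
  have hacoeff : ∀ n, ‖p.coeff n‖ * μ^n ≤ C := by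
    intro n
    have h1 : ‖p.coeff n‖ ≤ ‖p n‖ := by
      rw [FormalMultilinearSeries.coeff]
      have h2 := (p n).le_opNorm 1
      simpa only [Pi.one_apply, norm_one, Finset.prod_const_one, mul_one] using h2
    calc ‖p.coeff n‖ * μ^n ≤ ‖p n‖ * μ^n :=
          mul_le_mul_of_nonneg_right h1 (pow_nonneg hμ0.le n)
      _ ≤ C := hC n
  set g : ℕ → ℂ → ℂ := fun n z => p.coeff n * (z - c)^(n+1) / ((n:ℂ)+1) with hg_def
  set g' : ℕ → ℂ → ℂ := fun n z => (z - c)^n * p.coeff n with hg'_def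
  have hgderiv : ∀ n z, HasDerivAt (g n) (g' n z) z := by
    intro n z
    have h1 : HasDerivAt (fun w : ℂ => (w - c)^(n+1))
        (((n:ℂ)+1) * (z - c)^(n+1-1) * 1) z := by
      exact_mod_cast ((hasDerivAt_id z).sub_const c).pow (n+1)
    have h2 := (h1.const_mul (p.coeff n)).div_const ((n:ℂ)+1)
    have hn : ((n:ℂ)+1) ≠ 0 := Nat.cast_add_one_ne_zero n
    have e : g' n z = p.coeff n * (((n:ℂ)+1) * (z - c)^(n+1-1) * 1) / ((n:ℂ)+1) := by
      rw [eq_div_iff hn, Nat.add_sub_cancel]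
      show (z - c)^n * p.coeff n * ((n:ℂ)+1) = _
      ring
    rw [e]
    exact h2
  have hgbound : ∀ n z, z ∈ ball c τ → ‖g' n z‖ ≤ C * (τ/μ)^n := by
    intro n z hz
    have hzc : ‖z - c‖ ≤ τ := by
      have := mem_ball.mp hz
      rw [Complex.dist_eq] at this
      exact this.le
    have heq : ‖g' n z‖ = (‖z-c‖)^n * ‖p.coeff n‖ := by
      simp [hg'_def, norm_mul, norm_pow]
    rw [heq]
    have h3 : (‖z-c‖)^n * ‖p.coeff n‖ ≤ τ^n * ‖p.coeff n‖ := by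
      exact mul_le_mul_of_nonneg_right (pow_le_pow_left₀ (norm_nonneg _) hzc n)
        (norm_nonneg _)
    refine h3.trans ?_
    have h4 : τ^n * ‖p.coeff n‖ = (‖p.coeff n‖ * μ^n) * (τ/μ)^n := by
      have hμn : μ^n ≠ 0 := pow_ne_zero n hμ0.ne'
      rw [div_pow τ μ n, mul_assoc, mul_div_assoc', mul_comm (μ^n), mul_div_assoc, div_self hμn,
        mul_one, mul_comm]
    rw [h4]
    exact mul_le_mul_of_nonneg_right (hacoeff n) (pow_nonneg (by positivity) n)
  have hwsum : Summable (fun n => C * (τ/μ)^n) :=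
    (summable_geometric_of_lt_one (by positivity) (by rw [div_lt_one hμ0]; exact hτμ)).mul_left C
  have hg0 : Summable (fun n => g n c) := by
    have h0 : (fun n => g n c) = fun _ => (0:ℂ) := by
      funext n; simp [hg_def]
    rw [h0]; exact summable_zero
  have hL0 : ∀ y ∈ ball c τ, HasDerivAt (fun z => ∑' n, g n z) (∑' n, g' n y) y := fun y hy =>
    hasDerivAt_tsum_of_isPreconnected hwsum isOpen_ball (convex_ball c τ).isPreconnected
      (fun n z _ => hgderiv n z) hgbound (mem_ball_self hτ0) hg0 hy
  set L : ℂ → ℂ := fun z => Complex.log (u c) + ∑' n, g n z with hL_def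
  have hLd : ∀ y ∈ ball c τ, HasDerivAt L (v y) y := by
    intro y hy
    have h1 := (hL0 y hy).const_add (Complex.log (u c))
    have h2 : ∑' n, g' n y = v y := (hsum y (ball_subset_ball hτσ.le hy)).tsum_eq
    rwa [h2] at h1
  have hLdOn : DifferentiableOn ℂ L (ball c τ) := fun y hy =>
    ((hLd y hy).differentiableAt).differentiableWithinAt
  set W : ℂ → ℂ := fun z => Complex.exp (L z) * (u z)⁻¹ with hW_def
  have hwd : ∀ y ∈ ball c τ, HasDerivAt W 0 y := by
    intro y hy
    have hyρ : y ∈ ball c ρ := ball_subset_ball hτρ.le hy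
    have huy := hne y hyρ
    have hu_y : HasDerivAt u (deriv u y) y :=
      (hu.differentiableAt (isOpen_ball.mem_nhds hyρ)).hasDerivAt
    have h1 : HasDerivAt (fun z => Complex.exp (L z)) (Complex.exp (L y) * v y) y :=
      (hLd y hy).cexp
    have h2 : HasDerivAt (fun z => (u z)⁻¹) (-deriv u y / (u y)^2) y := hu_y.inv huy
    have h3 := h1.mul h2
    have hval : Complex.exp (L y) * v y * (u y)⁻¹
        + Complex.exp (L y) * (-deriv u y / (u y)^2) = 0 := by
      rw [hv_def]
      field_simp
      ring
    rw [hval] at h3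
    exact h3
  have hconst : ∀ z ∈ ball c τ, W z = W c := by
    intro z hz
    have hle := Convex.norm_image_sub_le_of_norm_hasDerivWithin_le
      (f := W) (f' := fun _ => 0) (s := ball c τ) (C := 0)
      (fun x hx => (hwd x hx).hasDerivWithinAt) (fun x _ => by simp)
      (convex_ball c τ) (mem_ball_self hτ0) hz
    have h0 : ‖W z - W c‖ ≤ 0 := by simpa using hle
    have := norm_le_zero_iff.mp h0
    exact sub_eq_zero.mp this
  have huc := hne c hcball
  have hwc : W c = 1 := by
    have h0 : (fun n => g n c) = fun _ => (0:ℂ) := by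
      funext n; simp [hg_def]
    simp only [hW_def, hL_def, h0, tsum_zero, add_zero]
    rw [Complex.exp_log huc, mul_inv_cancel₀ huc]
  refine ⟨L, hLdOn, fun z hz => ?_⟩
  have hz1 := hconst z hz
  rw [hwc] at hz1
  have huz := hne z (ball_subset_ball hτρ.le hz)
  rw [hW_def] at hz1
  field_simp at hz1
  exact hz1

lemma finite_zeros {h : ℂ → ℂ} {c : ℂ} {ρ r : ℝ} (hrρ : r < ρ)
    (hd : DifferentiableOn ℂ h (ball c ρ)) (hc0 : h c ≠ 0) :
    {z ∈ closedBall c r | h z = 0}.Finite := by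
  by_contra hinf
  obtain ⟨z₀, hz₀K, hacc⟩ := Set.Infinite.exists_accPt_of_subset_isCompact hinf
    (isCompact_closedBall c r) (fun z hz => hz.1)
  have hρpos : 0 < ρ := lt_of_le_of_lt (dist_nonneg.trans (mem_closedBall.mp hz₀K)) hrρ
  have hz₀ρ : z₀ ∈ ball c ρ := mem_ball.mpr (lt_of_le_of_lt (mem_closedBall.mp hz₀K) hrρ)
  have hfreq : ∃ᶠ z in nhdsWithin z₀ {z₀}ᶜ, h z = 0 := by
    rw [accPt_iff_frequently] at hacc
    rw [frequently_nhdsWithin_iff]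
    exact hacc.mono (fun z hz => ⟨hz.2.2, hz.1⟩)
  have han : AnalyticOnNhd ℂ h (ball c ρ) := hd.analyticOnNhd isOpen_ball
  have := han.eqOn_zero_of_preconnected_of_frequently_eq_zero
    (convex_ball c ρ).isPreconnected hz₀ρ hfreq
  exact hc0 (this (mem_ball_self hρpos))

lemma extract_zero {h : ℂ → ℂ} {c : ℂ} {ρ : ℝ} (hd : DifferentiableOn ℂ h (ball c ρ))
    {a : ℂ} (ha : a ∈ ball c ρ) (hnz : ¬ (∀ᶠ z in nhds a, h z = 0)) :
    ∃ (m : ℕ) (g : ℂ → ℂ), DifferentiableOn ℂ g (ball c ρ) ∧ g a ≠ 0 ∧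
      ∀ z ∈ ball c ρ, h z = (z - a)^m * g z := by
  have hA : AnalyticAt ℂ h a := hd.analyticAt (isOpen_ball.mem_nhds ha)
  obtain ⟨p, hp⟩ := hA
  have hp0 : p ≠ 0 := fun h0 => hnz (hp.locally_zero_iff.mpr h0)
  have hgd : ∀ k, DifferentiableOn ℂ ((Function.swap dslope a)^[k] h) (ball c ρ) := by
    intro k
    induction k with
    | zero => simpa using hd
    | succ k ih =>
      rw [Function.iterate_succ_apply']
      exact (Complex.differentiableOn_dslope (isOpen_ball.mem_nhds ha)).mpr ih
  refine ⟨p.order, (Function.swap dslope a)^[p.order] h, hgd p.order,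
    hp.iterate_dslope_fslope_ne_zero hp0, ?_⟩
  have hh_an : AnalyticOnNhd ℂ h (ball c ρ) := hd.analyticOnNhd isOpen_ball
  have hg_an : AnalyticOnNhd ℂ
      (fun z => (z - a)^p.order * (Function.swap dslope a)^[p.order] h z) (ball c ρ) := by
    intro z hz
    exact ((analyticAt_id.sub analyticAt_const).pow p.order).mul
      ((hgd p.order).analyticOnNhd isOpen_ball z hz)
  have heq := hh_an.eqOn_of_preconnected_of_eventuallyEq hg_an
    (convex_ball c ρ).isPreconnected ha (by
      exact Filter.Eventually.of_forall fun z => by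
        simpa [smul_eq_mul] using hp.eq_pow_order_mul_iterate_dslope z)
  exact fun z hz => heq hz

lemma factor_zeros (c : ℂ) (ρ r : ℝ) (hrρ : r < ρ) :
    ∀ (n : ℕ) (h : ℂ → ℂ), DifferentiableOn ℂ h (ball c ρ) → h c ≠ 0 →
    ∀ (hfin : {z ∈ closedBall c r | h z = 0}.Finite), hfin.toFinset.card ≤ n →
    ∃ (k : ℕ) (a : Fin k → ℂ) (u : ℂ → ℂ),
      (∀ i, a i ∈ closedBall c r ∧ h (a i) = 0) ∧
      DifferentiableOn ℂ u (ball c ρ) ∧ (∀ z ∈ closedBall c r, u z ≠ 0) ∧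
      ∀ z ∈ ball c ρ, h z = (∏ i, (z - a i)) * u z := by
  intro n
  induction n with
  | zero =>
    intro h hd hc0 hfin hcard
    refine ⟨0, Fin.elim0, h, fun i => i.elim0, hd, ?_, ?_⟩
    · intro z hz hz0
      have : z ∈ hfin.toFinset := hfin.mem_toFinset.mpr ⟨hz, hz0⟩
      rw [Finset.card_eq_zero.mp (Nat.le_zero.mp hcard)] at this
      exact absurd this (Finset.notMem_empty z)
    · intro z _
      simp
  | succ n ih =>
    intro h hd hc0 hfin hcard
    rcases Finset.eq_empty_or_nonempty hfin.toFinset with hemp | ⟨a, haZ⟩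
    · refine ⟨0, Fin.elim0, h, fun i => i.elim0, hd, ?_, ?_⟩
      · intro z hz hz0
        have : z ∈ hfin.toFinset := hfin.mem_toFinset.mpr ⟨hz, hz0⟩
        rw [hemp] at this
        exact absurd this (Finset.notMem_empty z)
      · intro z _
        simp
    · obtain ⟨haK, ha0⟩ := hfin.mem_toFinset.mp haZ
      have haρ : a ∈ ball c ρ := mem_ball.mpr (lt_of_le_of_lt (mem_closedBall.mp haK) hrρ)
      have hρpos : 0 < ρ := lt_of_le_of_lt (dist_nonneg.trans (mem_closedBall.mp haK)) hrρ
      have han : AnalyticOnNhd ℂ h (ball c ρ) := hd.analyticOnNhd isOpen_ball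
      have hnz : ¬ (∀ᶠ z in nhds a, h z = 0) := by
        intro hev
        have := han.eqOn_zero_of_preconnected_of_eventuallyEq_zero
          (convex_ball c ρ).isPreconnected haρ (by filter_upwards [hev] with z hz; exact hz)
        exact hc0 (this (mem_ball_self hρpos))
      obtain ⟨m, g, hgd, hga, heq⟩ := extract_zero hd haρ hnz
      have hca : c ≠ a := fun hca => hc0 (hca ▸ ha0)
      have hgc : g c ≠ 0 := by
        intro hgc0
        apply hc0
        rw [heq c (mem_ball_self hρpos), hgc0, mul_zero]
      have hm : m ≠ 0 := by
        intro hm0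
        apply hga
        have := heq a haρ
        rw [ha0, hm0, pow_zero, one_mul] at this
        exact this.symm
      -- zero set of g
      have hzg : ∀ z ∈ closedBall c r, (g z = 0 ↔ (h z = 0 ∧ z ≠ a)) := by
        intro z hzK
        have hzρ : z ∈ ball c ρ := mem_ball.mpr (lt_of_le_of_lt (mem_closedBall.mp hzK) hrρ)
        constructor
        · intro hg0
          have hza : z ≠ a := fun hza => hga (hza ▸ hg0)
          exact ⟨by rw [heq z hzρ, hg0, mul_zero], hza⟩
        · rintro ⟨hz0, hza⟩
          have hzz := heq z hzρ
          rw [hz0] at hzz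
          have hpow : (z - a)^m ≠ 0 := pow_ne_zero m (sub_ne_zero.mpr hza)
          exact (mul_eq_zero.mp hzz.symm).resolve_left hpow
      have hsub : {z ∈ closedBall c r | g z = 0} ⊆ {z ∈ closedBall c r | h z = 0} := by
        intro z hz
        exact ⟨hz.1, ((hzg z hz.1).mp hz.2).1⟩
      have hfing : {z ∈ closedBall c r | g z = 0}.Finite := hfin.subset hsub
      have htf : hfing.toFinset = hfin.toFinset.erase a := by
        ext z
        simp only [Set.Finite.mem_toFinset, Finset.mem_erase, Set.mem_setOf_eq]
        constructor
        · rintro ⟨hzK, hzg0⟩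
          obtain ⟨hz0, hza⟩ := (hzg z hzK).mp hzg0
          exact ⟨hza, hzK, hz0⟩
        · rintro ⟨hza, hzK, hz0⟩
          exact ⟨hzK, (hzg z hzK).mpr ⟨hz0, hza⟩⟩
      have hcardg : hfing.toFinset.card ≤ n := by
        rw [htf, Finset.card_erase_of_mem haZ]
        omega
      obtain ⟨k, b, u, hb, hud, hune, hufac⟩ := ih g hgd hgc hfing hcardg
      refine ⟨m + k, Fin.append (fun _ => a) b, u, ?_, hud, hune, ?_⟩
      · intro i
        refine Fin.addCases (fun i => ?_) (fun i => ?_) i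
        · simp only [Fin.append_left]
          exact ⟨haK, ha0⟩
        · simp only [Fin.append_right]
          refine ⟨(hb i).1, ?_⟩
          have hbρ : b i ∈ ball c ρ :=
            mem_ball.mpr (lt_of_le_of_lt (mem_closedBall.mp (hb i).1) hrρ)
          rw [heq (b i) hbρ, (hb i).2, mul_zero]
      · intro z hz
        rw [heq z hz, hufac z hz]
        rw [Fin.prod_univ_add]
        simp only [Fin.append_left, Fin.append_right]
        rw [Finset.prod_const, Finset.card_univ, Fintype.card_fin]
        ring

lemma log_submean {h : ℂ → ℂ} {c : ℂ} {ρ r : ℝ} (hr : 0 < r) (hrρ : r < ρ)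
    (hd : DifferentiableOn ℂ h (ball c ρ)) (hc0 : h c ≠ 0)
    (hs : ∀ z ∈ sphere c r, h z ≠ 0) :
    Real.log (‖h c‖) ≤
      (2*Real.pi)⁻¹ * ∫ θ in (0:ℝ)..(2*Real.pi), Real.log (‖h (circleMap c r θ)‖) := by
  have hρ0 : 0 < ρ := hr.trans hrρ
  have hfin := finite_zeros hrρ hd hc0
  obtain ⟨k, a, u, ha, hud, hune, hfac⟩ :=
    factor_zeros c ρ r hrρ hfin.toFinset.card h hd hc0 hfin le_rfl
  -- each zero is strictly inside the circle of radius r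
  have hain : ∀ i, ‖a i - c‖ < r := by
    intro i
    rcases lt_or_eq_of_le (mem_closedBall.mp (ha i).1) with hlt | heq
    · rwa [Complex.dist_eq] at hlt
    · exact absurd ((ha i).2) (hs (a i) (mem_sphere.mpr heq))
  have hane : ∀ i, a i ≠ c := by
    intro i hia
    exact hc0 (hia ▸ (ha i).2)
  -- u is nonvanishing on an open neighborhood of the closed ball
  set W : Set ℂ := {z | z ∈ ball c ρ ∧ u z ≠ 0} with hW_def
  have hWopen : IsOpen W := by
    rw [isOpen_iff_mem_nhds]
    rintro z ⟨hzρ, hzu⟩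
    have hcont : ContinuousAt u z :=
      (hud.differentiableAt (isOpen_ball.mem_nhds hzρ)).continuousAt
    filter_upwards [hcont.eventually_ne hzu, isOpen_ball.mem_nhds hzρ] with y hy1 hy2
    exact ⟨hy2, hy1⟩
  have hKW : closedBall c r ⊆ W := by
    intro z hz
    exact ⟨mem_ball.mpr (lt_of_le_of_lt (mem_closedBall.mp hz) hrρ), hune z hz⟩
  obtain ⟨δ, hδ0, hδ⟩ := (isCompact_closedBall c r).exists_thickening_subset_open hWopen hKW
  have hball_sub : ball c (r + δ/2) ⊆ W := by
    intro z hz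
    apply hδ
    rw [Metric.mem_thickening_iff]
    rcases le_or_gt (dist z c) r with hzr | hzr
    · exact ⟨z, mem_closedBall.mpr hzr, by simpa using hδ0⟩
    · set d : ℝ := dist z c with hd_def
      have hd0 : 0 < d := hr.trans hzr
      refine ⟨c + ((r/d : ℝ) : ℂ) * (z - c), ?_, ?_⟩
      · rw [mem_closedBall]
        have : dist (c + ((r/d : ℝ) : ℂ) * (z - c)) c = (r/d) * d := by
          rw [Complex.dist_eq]
          simp only [add_sub_cancel_left]
          rw [norm_mul, Complex.norm_real, Real.norm_eq_abs, abs_of_pos (by positivity)]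
          rw [← Complex.dist_eq, ← hd_def]
        rw [this]
        field_simp
        exact le_rfl
      · have hzd : dist z (c + ((r/d : ℝ) : ℂ) * (z - c)) = d - r := by
          rw [Complex.dist_eq]
          have hzz : z - (c + ((r/d : ℝ) : ℂ) * (z - c)) = ((1 - r/d : ℝ) : ℂ) * (z - c) := by
            push_cast
            ring
          rw [hzz, norm_mul, Complex.norm_real, Real.norm_eq_abs, ← Complex.dist_eq, ← hd_def]
          rw [_root_.abs_of_nonneg (by rw [sub_nonneg, div_le_one hd0]; exact hzr.le)]
          field_simp
        rw [hzd]
        have hzrδ : d ≤ r + δ/2 := (mem_ball.mp hz).le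
        linarith
  -- build a holomorphic logarithm of u near the closed ball
  have hu_ball : DifferentiableOn ℂ u (ball c (r + δ/2)) :=
    hud.mono (fun z hz => (hball_sub hz).1)
  have hu_ne : ∀ z ∈ ball c (r + δ/2), u z ≠ 0 := fun z hz => (hball_sub hz).2
  set τ : ℝ := r + δ/4 with hτ_def
  have hτr : r < τ := by rw [hτ_def]; linarith
  have hτ0 : 0 < τ := hr.trans hτr
  have hττ : τ < r + δ/2 := by rw [hτ_def]; linarith
  obtain ⟨L, hLd, hLu⟩ := exists_log hτ0 hττ hu_ball hu_ne
  -- pointwise splitting of the logarithm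
  have hsplit : ∀ z, z ∈ closedBall c r → z ∈ ball c ρ → (∀ i, z ≠ a i) →
      Real.log (‖h z‖)
        = (∑ i, Real.log (‖z - a i‖)) + (L z).re := by
    intro z hzK hzρ hza
    rw [hfac z hzρ]
    rw [norm_mul]
    have hprod_ne : ∀ i : Fin k, ‖z - a i‖ ≠ 0 := by
      intro i
      rw [ne_eq, norm_eq_zero, sub_eq_zero]
      exact hza i
    have huz : u z = Complex.exp (L z) := (hLu z (mem_ball.mpr (lt_of_le_of_lt (mem_closedBall.mp hzK) hτr))).symm
    rw [Real.log_mul ?_ ?_]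
    · congr 1
      · rw [norm_prod]
        rw [Real.log_prod (fun i _ => hprod_ne i)]
      · rw [huz, Complex.norm_exp, Real.log_exp]
    · rw [norm_prod]
      exact Finset.prod_ne_zero_iff.mpr (fun i _ => hprod_ne i)
    · rw [ne_eq, norm_eq_zero]
      exact fun h0 => hune z hzK (h0)
  -- split at the center
  have hcK : c ∈ closedBall c r := mem_closedBall_self hr.le
  have hcρ : c ∈ ball c ρ := mem_ball_self hρ0
  have hcsplit := hsplit c hcK hcρ (fun i hci => hane i hci.symm)
  -- split on the circle
  have hγK : ∀ θ : ℝ, circleMap c r θ ∈ closedBall c r :=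
    fun θ => circleMap_mem_closedBall c hr.le θ
  have hγS : ∀ θ : ℝ, circleMap c r θ ∈ sphere c r := fun θ => circleMap_mem_sphere c hr.le θ
  have hγρ : ∀ θ : ℝ, circleMap c r θ ∈ ball c ρ :=
    fun θ => mem_ball.mpr (lt_of_le_of_lt (mem_closedBall.mp (hγK θ)) hrρ)
  have hγa : ∀ θ : ℝ, ∀ i, circleMap c r θ ≠ a i := by
    intro θ i hia
    have h1 : dist (circleMap c r θ) c = r := mem_sphere.mp (hγS θ)
    rw [hia, Complex.dist_eq] at h1
    exact absurd h1 (ne_of_lt (hain i))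
  have hγsplit : ∀ θ : ℝ, Real.log (‖h (circleMap c r θ)‖)
      = (∑ i, Real.log (‖circleMap c r θ - a i‖)) + (L (circleMap c r θ)).re :=
    fun θ => hsplit (circleMap c r θ) (hγK θ) (hγρ θ) (hγa θ)
  -- integrate
  have hLint := circle_re_eq L c r hr (hLd.mono (closedBall_subset_ball hτr))
  have hIint : ∀ i : Fin k, IntervalIntegrable
      (fun θ => Real.log (‖circleMap c r θ - a i‖)) volume 0 (2*Real.pi) := by
    intro i
    refine (continuous_log_abs ?_ ?_).intervalIntegrable _ _
    · exact (continuous_circleMap c r).sub continuous_const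
    · intro θ
      rw [sub_ne_zero]
      exact hγa θ i
  have hLcont : Continuous fun θ => (L (circleMap c r θ)).re := by
    have h1 : Continuous fun θ => L (circleMap c r θ) := by
      have := (hLd.mono (closedBall_subset_ball hτr)).continuousOn.comp_continuous
        (continuous_circleMap c r) (fun θ => hγK θ)
      exact this
    exact Complex.continuous_re.comp h1
  have hint_eq : ∫ θ in (0:ℝ)..(2*Real.pi), Real.log (‖h (circleMap c r θ)‖)
      = (∑ i : Fin k, 2*Real.pi * Real.log r) + 2*Real.pi * (L c).re := by
    rw [intervalIntegral.integral_congr (fun θ _ => hγsplit θ)]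
    have hsum_int : IntervalIntegrable
        (fun θ => ∑ i : Fin k, Real.log (‖circleMap c r θ - a i‖))
        volume 0 (2*Real.pi) := by
      have h1 := IntervalIntegrable.sum Finset.univ (fun i (_ : i ∈ Finset.univ) => hIint i)
      have h2 : (∑ i : Fin k, fun θ => Real.log (‖circleMap c r θ - a i‖))
          = fun θ => ∑ i : Fin k, Real.log (‖circleMap c r θ - a i‖) := by
        funext θ
        simp
      rwa [h2] at h1
    rw [intervalIntegral.integral_add hsum_int (hLcont.intervalIntegrable _ _)]
    rw [intervalIntegral.integral_finset_sum (fun i _ => hIint i)]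
    rw [hLint]
    congr 1
    refine Finset.sum_congr rfl (fun i _ => ?_)
    exact integral_log_abs_sub c (a i) r hr (hain i)
  rw [hint_eq, hcsplit]
  have h2π : (0:ℝ) < 2*Real.pi := by positivity
  have hrhs : (2*Real.pi)⁻¹ * ((∑ _i : Fin k, 2*Real.pi * Real.log r) + 2*Real.pi * (L c).re)
      = (∑ _i : Fin k, Real.log r) + (L c).re := by
    rw [Finset.sum_const, Finset.sum_const]
    field_simp
    ring
  rw [hrhs]
  have hterm : ∀ i : Fin k, Real.log (‖c - a i‖) ≤ Real.log r := by
    intro i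
    have h1 : ‖c - a i‖ ≤ r := by
      rw [norm_sub_rev]
      exact (hain i).le
    have h2 : 0 < ‖c - a i‖ :=
      norm_pos_iff.mpr (sub_ne_zero.mpr (fun hc => hane i hc.symm))
    exact Real.log_le_log h2 h1
  have hsum_le : (∑ i : Fin k, Real.log (‖c - a i‖)) ≤ ∑ _i : Fin k, Real.log r :=
    Finset.sum_le_sum (fun i _ => hterm i)
  linarith

end QMSub

open QMSub

/-- **Subharmonicity of quotient metrics.** Let `H` be a Hilbert space and, for each `t` in a
domain `U ⊆ ℂ`, let `π t : H → ℂ` be a surjective bounded linear map depending holomorphically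
on `t`. If `e^{-ϕ(t)} = inf { ‖f‖² : π t f = 1 }`, then `ϕ` is subharmonic on `U`. -/
theorem quotient_metric_subharmonic
    (H : Type*) [NormedAddCommGroup H] [InnerProductSpace ℂ H] [CompleteSpace H]
    (U : Set ℂ) (hUopen : IsOpen U) (hUconn : IsConnected U)
    (π : ℂ → H →L[ℂ] ℂ)
    (hsurj : ∀ t ∈ U, Function.Surjective (π t))
    (hholo : ∀ f : H, DifferentiableOn ℂ (fun t => π t f) U)
    (ϕ : ℂ → ℝ)
    (hϕ : ∀ t ∈ U, Real.exp (-ϕ t) = sInf {x : ℝ | ∃ f : H, π t f = 1 ∧ x = ‖f‖ ^ 2}) :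
    SubharmonicOn ϕ U := by
  classical
  have hpi_pos : ∀ t ∈ U, 0 < ‖π t‖ := by
    intro t ht
    rcases hsurj t ht 1 with ⟨f, hf⟩
    have hne : π t ≠ 0 := by
      intro h0
      rw [h0] at hf
      simp at hf
    exact lt_of_le_of_ne (norm_nonneg _)
      (fun hn => hne ((ContinuousLinearMap.opNorm_zero_iff _).mp hn.symm))
  -- Step 1 : the explicit formula for ϕ
  have hphi : ∀ t ∈ U, ϕ t = 2 * Real.log ‖π t‖ := by
    intro t ht
    set g : H := (InnerProductSpace.toDual ℂ H).symm (π t) with hg_def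
    have hgn : ‖g‖ = ‖π t‖ := LinearIsometryEquiv.norm_map _ _
    have hg0 : (0:ℝ) < ‖g‖ := by rw [hgn]; exact hpi_pos t ht
    have happly : ∀ x : H, π t x = inner ℂ g x := by
      intro x
      exact (InnerProductSpace.toDual_symm_apply).symm
    set f₁ : H := ((‖g‖:ℂ)^2)⁻¹ • g with hf1_def
    have hgC : ((‖g‖:ℂ)^2) ≠ 0 := pow_ne_zero 2 (Complex.ofReal_ne_zero.mpr hg0.ne')
    have hπf₁ : π t f₁ = 1 := by
      rw [happly, hf1_def, inner_smul_right, inner_self_eq_norm_sq_to_K]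
      field_simp
      exact div_self hgC
    have hnf₁ : ‖f₁‖^2 = (‖g‖^2)⁻¹ := by
      rw [hf1_def, norm_smul, norm_inv, norm_pow, Complex.norm_real,
        Real.norm_eq_abs, _root_.abs_of_nonneg (norm_nonneg g)]
      field_simp
    have hSinf : sInf {x : ℝ | ∃ f : H, π t f = 1 ∧ x = ‖f‖ ^ 2} = (‖g‖^2)⁻¹ := by
      apply le_antisymm
      · refine csInf_le ⟨0, ?_⟩ ⟨f₁, hπf₁, hnf₁.symm⟩
        rintro x ⟨f, _, rfl⟩
        exact sq_nonneg _
      · have hSne : {x : ℝ | ∃ f : H, π t f = 1 ∧ x = ‖f‖ ^ 2}.Nonempty :=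
          ⟨‖f₁‖^2, ⟨f₁, hπf₁, rfl⟩⟩
        apply le_csInf hSne
        rintro x ⟨f, hf1, rfl⟩
        have h1 : (1:ℝ) = ‖π t f‖ := by rw [hf1]; simp
        have h2 : ‖π t f‖ ≤ ‖g‖ * ‖f‖ := by
          rw [happly]
          exact norm_inner_le_norm g f
        have h4 : 1 ≤ ‖g‖ * ‖f‖ := le_trans (le_of_eq h1) h2
        rw [show (‖g‖^2)⁻¹ = 1/‖g‖^2 by ring, div_le_iff₀ (by positivity)]
        nlinarith [norm_nonneg f, norm_nonneg g]
    have hexp := hϕ t ht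
    rw [hSinf, hgn] at hexp
    have h7 : Real.exp (-ϕ t) = Real.exp (-(2 * Real.log ‖π t‖)) := by
      rw [hexp, Real.exp_neg]
      congr 1
      rw [show (2:ℝ) * Real.log ‖π t‖ = Real.log (‖π t‖^2) by
        rw [Real.log_pow]; push_cast; ring]
      rw [Real.exp_log (pow_pos (hpi_pos t ht) 2)]
    have h8 := Real.exp_eq_exp.mp h7
    linarith
  -- Step 2 : continuity of the operator norm
  have hcont : ∀ c ∈ U, ContinuousAt (fun t => ‖π t‖) c := by
    intro c hc
    obtain ⟨ε, hε0, hεU⟩ := Metric.isOpen_iff.mp hUopen c hc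
    have hKU : closedBall c (ε/2) ⊆ U := fun z hz =>
      hεU (lt_of_le_of_lt (mem_closedBall.mp hz) (by linarith))
    have hBS : ∀ x : H, ∃ C, ∀ i : closedBall c (ε/2), ‖π i x‖ ≤ C := by
      intro x
      obtain ⟨C, hC⟩ := (isCompact_closedBall c (ε/2)).exists_bound_of_continuousOn
        (((hholo x).continuousOn).mono hKU)
      exact ⟨C, fun i => hC i i.2⟩
    obtain ⟨C, hC⟩ := banach_steinhaus hBS
    have hC0 : 0 ≤ C :=
      le_trans (norm_nonneg _) (hC ⟨c, mem_closedBall_self (by linarith)⟩)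
    have hlip : ∀ s ∈ ball c (ε/4), ∀ t ∈ ball c (ε/4),
        ‖π s - π t‖ ≤ (C / (ε/4)) * dist s t := by
      intro s hs t ht
      refine ContinuousLinearMap.opNorm_le_bound _ (by positivity) (fun x => ?_)
      have hder : ∀ z ∈ ball c (ε/4), ‖deriv (fun w => π w x) z‖ ≤ C * ‖x‖ / (ε/4) := by
        intro z hz
        have hzball : closedBall z (ε/4) ⊆ closedBall c (ε/2) := by
          intro y hy
          rw [mem_closedBall] at hy ⊢
          have hz' := mem_ball.mp hz
          calc dist y c ≤ dist y z + dist z c := dist_triangle y z c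
            _ ≤ ε/4 + ε/4 := add_le_add hy hz'.le
            _ = ε/2 := by ring
        have hdiff : DifferentiableOn ℂ (fun w => π w x) (closedBall z (ε/4)) :=
          (hholo x).mono (hzball.trans hKU)
        refine Complex.norm_deriv_le_of_forall_mem_sphere_norm_le (by positivity)
          (DifferentiableOn.diffContOnCl
            (by rwa [closure_ball z (by positivity : (0:ℝ) < ε/4).ne'])) ?_
        intro y hy
        have hyK : y ∈ closedBall c (ε/2) := hzball (sphere_subset_closedBall hy)
        calc ‖π y x‖ ≤ ‖π y‖ * ‖x‖ := (π y).le_opNorm x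
          _ ≤ C * ‖x‖ := mul_le_mul_of_nonneg_right (hC ⟨y, hyK⟩) (norm_nonneg x)
      have hmvt := Convex.norm_image_sub_le_of_norm_hasDerivWithin_le
        (f := fun w => π w x) (f' := fun z => deriv (fun w => π w x) z)
        (s := ball c (ε/4)) (C := C * ‖x‖ / (ε/4))
        (fun z hz => ((hholo x).differentiableAt
          (hUopen.mem_nhds (hεU (ball_subset_ball (by linarith) hz)))).hasDerivAt.hasDerivWithinAt)
        hder (convex_ball c (ε/4)) ht hs
      rw [ContinuousLinearMap.sub_apply]
      calc ‖π s x - π t x‖ ≤ (C * ‖x‖ / (ε/4)) * ‖s - t‖ := hmvt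
        _ = (C / (ε/4)) * dist s t * ‖x‖ := by rw [dist_eq_norm]; ring
    have hlipOn : LipschitzOnWith (Real.toNNReal (C/(ε/4)))
        (fun t => ‖π t‖) (ball c (ε/4)) := by
      apply LipschitzOnWith.of_dist_le_mul
      intro s hs t ht
      rw [Real.dist_eq]
      have h1 : |‖π s‖ - ‖π t‖| ≤ ‖π s - π t‖ := abs_norm_sub_norm_le _ _
      refine h1.trans ((hlip s hs t ht).trans ?_)
      rw [Real.coe_toNNReal _ (by positivity)]
    exact hlipOn.continuousOn.continuousAt
      (isOpen_ball.mem_nhds (mem_ball_self (by positivity)))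
  have hϕcont : ContinuousOn ϕ U := by
    intro t ht
    have h2 : ContinuousAt Real.log ‖π t‖ := Real.continuousAt_log (hpi_pos t ht).ne'
    have h1 : ContinuousAt (fun s => 2 * Real.log ‖π s‖) t := by
      have h3 := ContinuousAt.comp (g := Real.log) (f := fun s => ‖π s‖) (x := t) h2 (hcont t ht)
      exact continuousAt_const.mul h3
    exact h1.continuousWithinAt.congr (fun s hs => hphi s hs) (hphi t ht)
  constructor
  · exact hϕcont.upperSemicontinuousOn
  · intro c R hR hclU
    have hcU : c ∈ U := hclU (mem_closedBall_self hR.le)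
    obtain ⟨δU, hδU0, hδU⟩ :=
      (isCompact_closedBall c R).exists_thickening_subset_open hUopen hclU
    set ρ : ℝ := R + δU/2 with hρ_def
    have hRρ : R < ρ := by rw [hρ_def]; linarith
    have hballU : ball c ρ ⊆ U := by
      intro z hz
      apply hδU
      rw [Metric.mem_thickening_iff]
      rcases le_or_gt (dist z c) R with hzr | hzr
      · exact ⟨z, mem_closedBall.mpr hzr, by simpa using hδU0⟩
      · set d : ℝ := dist z c with hd_def
        have hd0 : 0 < d := hR.trans hzr
        refine ⟨c + ((R/d : ℝ) : ℂ) * (z - c), ?_, ?_⟩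
        · rw [mem_closedBall]
          have heq : dist (c + ((R/d : ℝ) : ℂ) * (z - c)) c = (R/d) * d := by
            rw [Complex.dist_eq]
            simp only [add_sub_cancel_left]
            rw [norm_mul, Complex.norm_real, Real.norm_eq_abs, abs_of_pos (by positivity)]
            rw [← Complex.dist_eq, ← hd_def]
          rw [heq]
          field_simp
          exact le_rfl
        · have hzd : dist z (c + ((R/d : ℝ) : ℂ) * (z - c)) = d - R := by
            rw [Complex.dist_eq]
            have hzz : z - (c + ((R/d : ℝ) : ℂ) * (z - c)) = ((1 - R/d : ℝ) : ℂ) * (z - c) := by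
              push_cast
              ring
            rw [hzz, norm_mul, Complex.norm_real, Real.norm_eq_abs, ← Complex.dist_eq, ← hd_def]
            rw [_root_.abs_of_nonneg (by rw [sub_nonneg, div_le_one hd0]; exact hzr.le)]
            field_simp
          rw [hzd]
          have hzrδ : d < R + δU/2 := mem_ball.mp hz
          linarith
    -- The Riesz vector at the center
    set g : H := (InnerProductSpace.toDual ℂ H).symm (π c) with hg_def
    have hgn : ‖g‖ = ‖π c‖ := LinearIsometryEquiv.norm_map _ _
    have hg0 : (0:ℝ) < ‖g‖ := by rw [hgn]; exact hpi_pos c hcU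
    set f₀ : H := ((‖g‖:ℂ))⁻¹ • g with hf0_def
    have hf₀ : ‖f₀‖ = 1 := by
      rw [hf0_def, norm_smul, norm_inv, Complex.norm_real,
        Real.norm_eq_abs, _root_.abs_of_nonneg (norm_nonneg g)]
      field_simp
    set h : ℂ → ℂ := fun z => π z f₀ with hh_def
    have hdh : DifferentiableOn ℂ h (ball c ρ) := (hholo f₀).mono hballU
    have hhc : h c = ((‖g‖ : ℝ) : ℂ) := by
      have happly : π c f₀ = inner ℂ g f₀ := (InnerProductSpace.toDual_symm_apply).symm
      rw [hh_def]
      simp only []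
      rw [happly, hf0_def, inner_smul_right, inner_self_eq_norm_sq_to_K]
      have : ((‖g‖:ℂ)) ≠ 0 := Complex.ofReal_ne_zero.mpr hg0.ne'
      field_simp
      rfl
    have hhc_abs : ‖h c‖ = ‖π c‖ := by
      rw [hhc, Complex.norm_real, Real.norm_eq_abs, _root_.abs_of_nonneg (norm_nonneg g), hgn]
    have hhc0 : h c ≠ 0 := by
      rw [hhc]
      exact Complex.ofReal_ne_zero.mpr hg0.ne'
    have hfin : {z ∈ closedBall c R | h z = 0}.Finite := finite_zeros hRρ hdh hhc0
    set B : Set ℝ := (fun z => dist z c) '' {z ∈ closedBall c R | h z = 0} with hB_def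
    have hBfin : B.Finite := hfin.image _
    -- reduce to an ε-approximation
    show ϕ c ≤ (2 * Real.pi)⁻¹ * ∫ θ in (0:ℝ)..(2 * Real.pi), ϕ (circleMap c R θ)
    refine le_of_forall_pos_le_add ?_
    intro ε hε0
    have hUC := (isCompact_closedBall c R).uniformContinuousOn_of_continuous
      (hϕcont.mono hclU)
    rw [Metric.uniformContinuousOn_iff] at hUC
    obtain ⟨δ, hδ0, hδ⟩ := hUC ε hε0
    set l : ℝ := max (R - δ/2) (R/2) with hl_def
    have hlR : l < R := by
      rw [hl_def]
      apply max_lt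
      · linarith
      · linarith
    obtain ⟨r', hr'mem, hr'B⟩ : ∃ r' ∈ Ioo l R, r' ∉ B := by
      obtain ⟨r', hr'⟩ := ((Set.Ioo_infinite hlR).diff hBfin).nonempty
      exact ⟨r', hr'.1, hr'.2⟩
    have hr'0 : 0 < r' := by
      have h1 : R/2 ≤ l := le_max_right _ _
      have := hr'mem.1
      linarith
    have hr'R : r' < R := hr'mem.2
    have hsph : ∀ z ∈ sphere c r', h z ≠ 0 := by
      intro z hz hz0
      apply hr'B
      rw [hB_def]
      exact ⟨z, ⟨mem_closedBall.mpr (by rw [mem_sphere.mp hz]; exact hr'R.le), hz0⟩,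
        mem_sphere.mp hz⟩
    have hkey := log_submean hr'0 (hr'R.trans hRρ) hdh hhc0 hsph
    have hγK : ∀ θ : ℝ, circleMap c r' θ ∈ closedBall c R :=
      fun θ => closedBall_subset_closedBall hr'R.le (circleMap_mem_closedBall c hr'0.le θ)
    have hphi_ge : ∀ θ : ℝ,
        2 * Real.log (‖h (circleMap c r' θ)‖) ≤ ϕ (circleMap c r' θ) := by
      intro θ
      have hzU : circleMap c r' θ ∈ U := hclU (hγK θ)
      have h1 : ‖h (circleMap c r' θ)‖ ≤ ‖π (circleMap c r' θ)‖ := by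
        have h2 := (π (circleMap c r' θ)).le_opNorm f₀
        rwa [hf₀, mul_one] at h2
      have h2 : 0 < ‖h (circleMap c r' θ)‖ :=
        norm_pos_iff.mpr (hsph _ (circleMap_mem_sphere c hr'0.le θ))
      have h3 := (Real.log_le_log_iff h2 (h2.trans_le h1)).mpr h1
      rw [hphi _ hzU]
      linarith
    have hhcont : Continuous fun θ => h (circleMap c r' θ) := by
      rw [continuous_iff_continuousAt]
      intro θ
      exact (((hholo f₀).differentiableAt
        (hUopen.mem_nhds (hclU (hγK θ)))).continuousAt).comp
        (continuous_circleMap c r').continuousAt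
    have hlogcont : Continuous fun θ => Real.log (‖h (circleMap c r' θ)‖) :=
      continuous_log_abs hhcont (fun θ => hsph _ (circleMap_mem_sphere c hr'0.le θ))
    have hγcont : Continuous fun θ => ϕ (circleMap c r' θ) := by
      rw [continuous_iff_continuousAt]
      intro θ
      exact (hϕcont.continuousAt (hUopen.mem_nhds (hclU (hγK θ)))).comp
        (continuous_circleMap c r').continuousAt
    have hγRcont : Continuous fun θ => ϕ (circleMap c R θ) := by
      rw [continuous_iff_continuousAt]
      intro θ
      exact (hϕcont.continuousAt
        (hUopen.mem_nhds (hclU (circleMap_mem_closedBall c hR.le θ)))).comp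
        (continuous_circleMap c R).continuousAt
    have hint1 : ∫ θ in (0:ℝ)..(2*Real.pi),
        2 * Real.log (‖h (circleMap c r' θ)‖)
        ≤ ∫ θ in (0:ℝ)..(2*Real.pi), ϕ (circleMap c r' θ) := by
      apply intervalIntegral.integral_mono_on (by positivity)
        ((continuous_const.mul hlogcont).intervalIntegrable _ _)
        (hγcont.intervalIntegrable _ _)
      exact fun θ _ => hphi_ge θ
    have hint2 : ∫ θ in (0:ℝ)..(2*Real.pi), ϕ (circleMap c r' θ)
        ≤ (∫ θ in (0:ℝ)..(2*Real.pi), ϕ (circleMap c R θ)) + 2*Real.pi * ε := by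
      have hpt : ∀ θ ∈ Icc (0:ℝ) (2*Real.pi),
          ϕ (circleMap c r' θ) ≤ ϕ (circleMap c R θ) + ε := by
        intro θ _
        have hz2 : circleMap c R θ ∈ closedBall c R := circleMap_mem_closedBall c hR.le θ
        have hdist : dist (circleMap c r' θ) (circleMap c R θ) < δ := by
          have hsub : circleMap c r' θ - circleMap c R θ
              = ((r' - R : ℝ):ℂ) * Complex.exp (θ*I) := by
            simp only [circleMap]
            push_cast
            ring
          rw [Complex.dist_eq, hsub, norm_mul, Complex.norm_real, Real.norm_eq_abs,
            Complex.norm_exp_ofReal_mul_I, mul_one]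
          rw [_root_.abs_of_nonpos (by linarith)]
          have h1 : R - δ/2 ≤ l := le_max_left _ _
          have := hr'mem.1
          linarith
        have h5 := hδ _ (hγK θ) _ hz2 hdist
        rw [Real.dist_eq] at h5
        have h6 := abs_lt.mp h5
        linarith [h6.2]
      calc ∫ θ in (0:ℝ)..(2*Real.pi), ϕ (circleMap c r' θ)
          ≤ ∫ θ in (0:ℝ)..(2*Real.pi), (ϕ (circleMap c R θ) + ε) :=
            intervalIntegral.integral_mono_on (by positivity)
              (hγcont.intervalIntegrable _ _)
              ((hγRcont.add continuous_const).intervalIntegrable _ _) hpt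
        _ = (∫ θ in (0:ℝ)..(2*Real.pi), ϕ (circleMap c R θ)) + 2*Real.pi * ε := by
            rw [intervalIntegral.integral_add (hγRcont.intervalIntegrable _ _)
              intervalIntegrable_const, intervalIntegral.integral_const, smul_eq_mul,
              sub_zero]
    have h2π : (0:ℝ) < 2*Real.pi := by positivity
    calc ϕ c = 2 * Real.log (‖h c‖) := by rw [hphi c hcU, hhc_abs]
      _ ≤ 2 * ((2*Real.pi)⁻¹ * ∫ θ in (0:ℝ)..(2*Real.pi),
            Real.log (‖h (circleMap c r' θ)‖)) := by linarith [hkey]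
      _ = (2*Real.pi)⁻¹ * ∫ θ in (0:ℝ)..(2*Real.pi),
            2 * Real.log (‖h (circleMap c r' θ)‖) := by
          rw [intervalIntegral.integral_const_mul]
          ring
      _ ≤ (2*Real.pi)⁻¹ * ∫ θ in (0:ℝ)..(2*Real.pi), ϕ (circleMap c r' θ) :=
          mul_le_mul_of_nonneg_left hint1 (by positivity)
      _ ≤ (2*Real.pi)⁻¹ * ((∫ θ in (0:ℝ)..(2*Real.pi), ϕ (circleMap c R θ)) + 2*Real.pi*ε) :=
          mul_le_mul_of_nonneg_left hint2 (by positivity)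
      _ = (2*Real.pi)⁻¹ * (∫ θ in (0:ℝ)..(2*Real.pi), ϕ (circleMap c R θ)) + ε := by
          field_simp


end
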